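/- Let Σ = XX^T and Λ = YY^T with X, Y ∈ Mat(n), and let R ∈ O(n) be such that H = X^T Y R^T is symmetric positive semi-definite. Then the curve γ(t) = (1−t)²Σ + t²Λ + 2t(1−t)·sym(XRY^T) satisfies γ(t) = c(t)c(t)^T where c(t) = (1−t)X + tYR^T, so γ(t) is PSD for all t ∈ [0,1], and the Frobenius length of c on [0,1], namely ‖YR^T − X‖, equals the Bures-Wasserstein distance d_BW(Σ,Λ). -/

import Mathlib

open Matrix

open Classical in
/-- The symmetric PSD square root of a PSD matrix (junk value `0` otherwise). -/
noncomputable def psdSqrt {n : ℕ} (A : Matrix (Fin n) (Fin n) ℝ) : Matrix (Fin n) (Fin n) ℝ :=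
  if h : A.PosSemidef then
    (h.1.eigenvectorUnitary : Matrix (Fin n) (Fin n) ℝ) *
      diagonal (fun i => √(h.1.eigenvalues i)) *
      (star h.1.eigenvectorUnitary : Matrix (Fin n) (Fin n) ℝ)
  else 0

/-- Frobenius (Euclidean) distance between matrices. -/
noncomputable def frobDist {m k : ℕ} (A B : Matrix (Fin m) (Fin k) ℝ) : ℝ :=
  Real.sqrt (((A - B)ᵀ * (A - B)).trace)


/-- Symmetric part of a square matrix. -/
noncomputable def symPart {n : ℕ} (M : Matrix (Fin n) (Fin n) ℝ) : Matrix (Fin n) (Fin n) ℝ :=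
  (1 / 2 : ℝ) • (M + Mᵀ)

/-- Port helper: the old `Matrix.PosSemidef.sqrt`, with the same formula as `psdSqrt`. -/
noncomputable def Matrix.PosSemidef.sqrt {n : ℕ} {A : Matrix (Fin n) (Fin n) ℝ}
    (h : A.PosSemidef) : Matrix (Fin n) (Fin n) ℝ :=
  (h.1.eigenvectorUnitary : Matrix (Fin n) (Fin n) ℝ) *
    diagonal (fun i => √(h.1.eigenvalues i)) *
    (star h.1.eigenvectorUnitary : Matrix (Fin n) (Fin n) ℝ)

section PortSqrt
open scoped MatrixOrder

lemma Matrix.PosSemidef.sqrt_eq_cfc {n : ℕ} {A : Matrix (Fin n) (Fin n) ℝ}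
    (h : A.PosSemidef) : h.sqrt = CFC.sqrt A := by
  rw [CFC.sqrt_eq_cfc, cfc_nnreal_eq_real _ A h.nonneg, h.1.cfc_eq, IsHermitian.cfc,
    Unitary.conjStarAlgAut_apply, Matrix.PosSemidef.sqrt]
  congr 2
  congr 1
  funext i
  simp only [Function.comp_apply, RCLike.ofReal_real_eq_id, id]
  rw [Real.coe_sqrt, Real.coe_toNNReal _ (h.eigenvalues_nonneg i)]

lemma Matrix.PosSemidef.posSemidef_sqrt {n : ℕ} {A : Matrix (Fin n) (Fin n) ℝ}
    (h : A.PosSemidef) : h.sqrt.PosSemidef := by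
  rw [h.sqrt_eq_cfc]
  exact (CFC.sqrt_nonneg A).posSemidef

lemma Matrix.PosSemidef.sqrt_mul_self {n : ℕ} {A : Matrix (Fin n) (Fin n) ℝ}
    (h : A.PosSemidef) : h.sqrt * h.sqrt = A := by
  rw [h.sqrt_eq_cfc]
  exact CFC.sqrt_mul_sqrt_self A h.nonneg

lemma Matrix.PosSemidef.eq_sqrt_of_sq_eq {n : ℕ} {A : Matrix (Fin n) (Fin n) ℝ}
    (hA : A.PosSemidef) {B : Matrix (Fin n) (Fin n) ℝ} (hB : B.PosSemidef) (hAB : A ^ 2 = B) :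
    A = hB.sqrt := by
  rw [hB.sqrt_eq_cfc]
  exact (CFC.sqrt_unique (by rw [← sq]; exact hAB) hA.nonneg).symm

end PortSqrt


private lemma aux_inv_mul (a : ℝ) (ha : 0 ≤ a) (h0 : a ≠ 0) :
    (Real.sqrt a)⁻¹ * a * (Real.sqrt a)⁻¹ = 1 := by
  have hs := Real.mul_self_sqrt ha
  have hsne : Real.sqrt a ≠ 0 := by
    intro h; apply h0; rw [← hs, h, mul_zero]
  field_simp
  rw [Real.sq_sqrt ha]



variable {m : ℕ} in
lemma trace_sqrt_mul_transpose_eq (A : Matrix (Fin m) (Fin m) ℝ)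
    (hQ : (A * Aᵀ).PosSemidef) (hP : (Aᵀ * A).PosSemidef) :
    hQ.sqrt.trace = hP.sqrt.trace := by
  classical
  set U : Matrix (Fin m) (Fin m) ℝ := hP.1.eigenvectorUnitary.1 with hU
  set μ : Fin m → ℝ := hP.1.eigenvalues with hμ
  have hμ0 : ∀ i, 0 ≤ μ i := hP.eigenvalues_nonneg
  have hUU : star U * U = 1 := Matrix.mem_unitaryGroup_iff'.mp hP.1.eigenvectorUnitary.2
  have hUU' : U * star U = 1 := Matrix.mem_unitaryGroup_iff.mp hP.1.eigenvectorUnitary.2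
  have hsU : star U = Uᵀ := by
    rw [Matrix.star_eq_conjTranspose, Matrix.conjTranspose_eq_transpose_of_trivial]
  have hspec : Uᵀ * (Aᵀ * A) * U = Matrix.diagonal μ := by
    have := (Unitary.conjStarAlgAut_star_apply (S := ℝ) _ _).symm.trans hP.1.conjStarAlgAut_star_eigenvectorUnitary
    rw [hsU] at this
    simpa using this
  set V : Matrix (Fin m) (Fin m) ℝ := A * U with hV
  have hVV : Vᵀ * V = Matrix.diagonal μ := by
    rw [hV, Matrix.transpose_mul]
    calc Uᵀ * Aᵀ * (A * U) = Uᵀ * (Aᵀ * A) * U := by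
          simp only [Matrix.mul_assoc]
      _ = Matrix.diagonal μ := hspec
  -- columns with zero eigenvalue vanish
  have hcol : ∀ i, μ i = 0 → ∀ k, V k i = 0 := by
    intro i hi k
    have h1 : (Vᵀ * V) i i = μ i := by rw [hVV]; simp
    have h2 : ∑ j, V j i * V j i = 0 := by
      rw [← hi, ← h1]; simp [Matrix.mul_apply, Matrix.transpose_apply]
    have := (Finset.sum_eq_zero_iff_of_nonneg (fun j _ => mul_self_nonneg (V j i))).mp h2 k
      (Finset.mem_univ k)
    exact (mul_self_eq_zero).mp this
  set g : Fin m → ℝ := fun i => (Real.sqrt (μ i))⁻¹ with hg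
  set Q' : Matrix (Fin m) (Fin m) ℝ := V * Matrix.diagonal g * Vᵀ with hQ'
  have hgnn : ∀ i, 0 ≤ g i := fun i => inv_nonneg.mpr (Real.sqrt_nonneg _)
  have hQ'psd : Q'.PosSemidef := by
    have hd : (Matrix.diagonal g).PosSemidef := by
      refine Matrix.posSemidef_diagonal_iff.mpr fun i => hgnn i
    have := hd.mul_mul_conjTranspose_same V
    rwa [Matrix.conjTranspose_eq_transpose_of_trivial] at this
  have hVdiag : V * Matrix.diagonal (fun i => g i * μ i * g i) = V := by
    ext k i
    rw [Matrix.mul_diagonal]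
    by_cases hi : μ i = 0
    · rw [hcol i hi k]; ring
    · have : g i * μ i * g i = 1 := aux_inv_mul (μ i) (hμ0 i) hi
      rw [this, mul_one]
  have hQ'sq : Q' ^ 2 = A * Aᵀ := by
    have : Q' ^ 2 = V * Matrix.diagonal (fun i => g i * μ i * g i) * Vᵀ := by
      rw [pow_two, hQ']
      calc V * Matrix.diagonal g * Vᵀ * (V * Matrix.diagonal g * Vᵀ)
          = V * (Matrix.diagonal g * (Vᵀ * V) * Matrix.diagonal g) * Vᵀ := by
            simp only [Matrix.mul_assoc]
        _ = V * (Matrix.diagonal g * Matrix.diagonal μ * Matrix.diagonal g) * Vᵀ := by rw [hVV]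
        _ = V * Matrix.diagonal (fun i => g i * μ i * g i) * Vᵀ := by
            simp only [Matrix.diagonal_mul_diagonal, Matrix.mul_assoc]
    rw [this, hVdiag, hV, Matrix.transpose_mul, ← hsU]
    calc A * U * (star U * Aᵀ) = A * (U * star U) * Aᵀ := by simp only [Matrix.mul_assoc]
      _ = A * Aᵀ := by rw [hUU']; simp
  have hQeq : hQ.sqrt = Q' := (hQ'psd.eq_sqrt_of_sq_eq hQ hQ'sq).symm
  have htrQ : hQ.sqrt.trace = ∑ i, Real.sqrt (μ i) := by
    rw [hQeq, hQ', Matrix.trace_mul_cycle, hVV,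
      Matrix.diagonal_mul_diagonal, Matrix.trace_diagonal]
    exact Finset.sum_congr rfl fun i _ => by
      rw [hg, ← div_eq_mul_inv, Real.div_sqrt]
  have htrP : hP.sqrt.trace = ∑ i, Real.sqrt (μ i) := by
    rw [Matrix.PosSemidef.sqrt, Matrix.trace_mul_cycle, hUU, Matrix.one_mul,
      Matrix.trace_diagonal]
  rw [htrQ, htrP]


lemma psdSqrt_congr {n : ℕ} {M N : Matrix (Fin n) (Fin n) ℝ} (hM : M.PosSemidef) (e : M = N) :
    hM.sqrt = psdSqrt N := by
  subst e
  exact (dif_pos hM).symm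

lemma posSemidef_mul_transpose {n : ℕ} (M : Matrix (Fin n) (Fin n) ℝ) :
    (M * Mᵀ).PosSemidef := by
  have := Matrix.posSemidef_self_mul_conjTranspose M
  rwa [Matrix.conjTranspose_eq_transpose_of_trivial] at this

lemma posSemidef_transpose_mul {n : ℕ} (M : Matrix (Fin n) (Fin n) ℝ) :
    (Mᵀ * M).PosSemidef := by
  have := Matrix.posSemidef_conjTranspose_mul_self M
  rwa [Matrix.conjTranspose_eq_transpose_of_trivial] at this

theorem minimizing_geodesic_segment (n : ℕ) (X Y R : Matrix (Fin n) (Fin n) ℝ)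
    (hR : Rᵀ * R = 1) (hH : (Xᵀ * Y * Rᵀ).PosSemidef) :
    (∀ t : ℝ,
        (1 - t) ^ 2 • (X * Xᵀ) + t ^ 2 • (Y * Yᵀ)
            + (2 * t * (1 - t)) • symPart (X * R * Yᵀ)
          = ((1 - t) • X + t • (Y * Rᵀ)) * ((1 - t) • X + t • (Y * Rᵀ))ᵀ) ∧
    (∀ t ∈ Set.Icc (0 : ℝ) 1,
        ((1 - t) ^ 2 • (X * Xᵀ) + t ^ 2 • (Y * Yᵀ)
            + (2 * t * (1 - t)) • symPart (X * R * Yᵀ)).PosSemidef) ∧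
    frobDist (Y * Rᵀ) X
      = Real.sqrt ((X * Xᵀ + Y * Yᵀ
          - 2 • psdSqrt (psdSqrt (X * Xᵀ) * (Y * Yᵀ) * psdSqrt (X * Xᵀ))).trace) := by
  have hYR : (Y * Rᵀ) * (Y * Rᵀ)ᵀ = Y * Yᵀ := by
    rw [Matrix.transpose_mul, Matrix.transpose_transpose]
    calc Y * Rᵀ * (R * Yᵀ) = Y * (Rᵀ * R) * Yᵀ := by simp only [Matrix.mul_assoc]
      _ = Y * Yᵀ := by rw [hR, Matrix.mul_one]
  have key : ∀ t : ℝ,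
      (1 - t) ^ 2 • (X * Xᵀ) + t ^ 2 • (Y * Yᵀ)
          + (2 * t * (1 - t)) • symPart (X * R * Yᵀ)
        = ((1 - t) • X + t • (Y * Rᵀ)) * ((1 - t) • X + t • (Y * Rᵀ))ᵀ := by
    intro t
    have hXRY : (X * R * Yᵀ)ᵀ = (Y * Rᵀ) * Xᵀ := by
      simp [Matrix.transpose_mul, Matrix.mul_assoc]
    have hXRY' : X * R * Yᵀ = X * (R * Yᵀ) := by simp [Matrix.mul_assoc]
    rw [symPart, hXRY, hXRY']
    simp only [Matrix.transpose_add, Matrix.transpose_smul, Matrix.add_mul, Matrix.mul_add,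
      Matrix.smul_mul, Matrix.mul_smul, smul_add, smul_smul, Matrix.transpose_mul,
      Matrix.transpose_transpose]
    have h2 : Y * Rᵀ * (R * Yᵀ) = Y * Yᵀ := by
      calc Y * Rᵀ * (R * Yᵀ) = Y * (Rᵀ * R) * Yᵀ := by simp only [Matrix.mul_assoc]
        _ = Y * Yᵀ := by rw [hR, Matrix.mul_one]
    rw [h2]
    module
  refine ⟨key, fun t _ => ?_, ?_⟩
  · rw [key t]
    exact posSemidef_mul_transpose _
  · -- distance part
    have hSig : (X * Xᵀ).PosSemidef := posSemidef_mul_transpose X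
    have hS : psdSqrt (X * Xᵀ) = hSig.sqrt := dif_pos hSig
    set S := hSig.sqrt with hSdef
    have hSpsd : S.PosSemidef := hSig.posSemidef_sqrt
    have hSsym : Sᵀ = S := by
      have := hSpsd.1
      rwa [Matrix.IsHermitian, Matrix.conjTranspose_eq_transpose_of_trivial] at this
    have hSS : S * S = X * Xᵀ := hSig.sqrt_mul_self
    set A := S * (Y * Rᵀ) with hA
    have hQpsd : (A * Aᵀ).PosSemidef := posSemidef_mul_transpose A
    have hPpsd : (Aᵀ * A).PosSemidef := posSemidef_transpose_mul A
    have eQ : A * Aᵀ = S * (Y * Yᵀ) * S := by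
      rw [hA, Matrix.transpose_mul, hSsym]
      calc S * (Y * Rᵀ) * ((Y * Rᵀ)ᵀ * S) = S * (Y * Rᵀ * (Y * Rᵀ)ᵀ) * S := by
            simp only [Matrix.mul_assoc]
        _ = S * (Y * Yᵀ) * S := by rw [hYR]
    have hHsym : (Xᵀ * Y * Rᵀ)ᵀ = Xᵀ * Y * Rᵀ := by
      have := hH.1
      rwa [Matrix.IsHermitian, Matrix.conjTranspose_eq_transpose_of_trivial] at this
    have hH2 : (Xᵀ * Y * Rᵀ) ^ 2 = Aᵀ * A := by
      rw [pow_two]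
      calc (Xᵀ * Y * Rᵀ) * (Xᵀ * Y * Rᵀ)
          = (Xᵀ * Y * Rᵀ)ᵀ * (Xᵀ * Y * Rᵀ) := by rw [hHsym]
        _ = (Y * Rᵀ)ᵀ * (X * Xᵀ) * (Y * Rᵀ) := by
            simp only [Matrix.transpose_mul, Matrix.transpose_transpose, Matrix.mul_assoc]
        _ = (Y * Rᵀ)ᵀ * (S * S) * (Y * Rᵀ) := by rw [hSS]
        _ = (Y * Rᵀ)ᵀ * S * (S * (Y * Rᵀ)) := by simp only [Matrix.mul_assoc]
        _ = Aᵀ * A := by conv_rhs => rw [hA, Matrix.transpose_mul, hSsym]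
    have hHsqrt : Xᵀ * Y * Rᵀ = hPpsd.sqrt := hH.eq_sqrt_of_sq_eq hPpsd hH2
    have htr : (psdSqrt (psdSqrt (X * Xᵀ) * (Y * Yᵀ) * psdSqrt (X * Xᵀ))).trace
        = (Xᵀ * Y * Rᵀ).trace := by
      rw [hS, ← psdSqrt_congr hQpsd eQ, trace_sqrt_mul_transpose_eq A hQpsd hPpsd, ← hHsqrt]
    rw [frobDist]
    congr 1
    have e1 : ((Y * Rᵀ - X)ᵀ * (Y * Rᵀ - X)).trace
        = (Y * Yᵀ).trace + (X * Xᵀ).trace - 2 * (Xᵀ * Y * Rᵀ).trace := by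
      rw [Matrix.transpose_sub, Matrix.sub_mul, Matrix.mul_sub, Matrix.mul_sub,
        Matrix.trace_sub, Matrix.trace_sub, Matrix.trace_sub]
      have t1 : ((Y * Rᵀ)ᵀ * (Y * Rᵀ)).trace = (Y * Yᵀ).trace := by
        rw [Matrix.trace_mul_comm, hYR]
      have t2 : ((Y * Rᵀ)ᵀ * X).trace = (Xᵀ * Y * Rᵀ).trace := by
        have h : (Y * Rᵀ)ᵀ * X = (Xᵀ * Y * Rᵀ)ᵀ := by
          simp [Matrix.transpose_mul, Matrix.mul_assoc]
        rw [h, Matrix.trace_transpose]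
      have t3 : (Xᵀ * (Y * Rᵀ)).trace = (Xᵀ * Y * Rᵀ).trace := by
        rw [← Matrix.mul_assoc]
      have t4 : (Xᵀ * X).trace = (X * Xᵀ).trace := Matrix.trace_mul_comm _ _
      rw [t1, t2, t3, t4]
      ring
    rw [e1, Matrix.trace_sub, Matrix.trace_add, Matrix.trace_smul, htr, nsmul_eq_mul]
    push_cast
    ring
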